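/- arXiv:1902.10427 — 4 statements merged into one kernel-verified Lean document; each statement's English description precedes it below -/
import Mathlib

section
/- Let F be a cdf with continuous density f > 0 and F < 1 on [0, r], and suppose the virtual value ψ_F(x) = x − (1−F(x))/f(x) satisfies ψ_F(x) ≤ 0 for all x ∈ [0, r]. Then for every integrable function h : [0, r] → [0, ∞), ∫₀^r ( x·f(x)/(1−F(x)) ) · [ ∫ₓ^r h(t)·f(t) dt − h(x)·(1−F(x)) ] dx ≤ 0. -/
open MeasureTheory intervalIntegral

/-- Fubini-type identity: `∫₀^r (∫ₓ^r w) dx = ∫₀^r t·w(t) dt`. -/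
lemma fubini_aux (r : ℝ) (hr : 0 < r) (w : ℝ → ℝ)
    (hw : IntegrableOn w (Set.Icc 0 r)) :
    ∫ x in (0:ℝ)..r, (∫ t in x..r, w t) = ∫ t in (0:ℝ)..r, t * w t := by
  have hw' : IntegrableOn w (Set.Ioc 0 r) := hw.mono_set Set.Ioc_subset_Icc_self
  set ν := volume.restrict (Set.Ioc (0:ℝ) r) with hν
  have hfin : IsFiniteMeasure ν := by
    constructor
    rw [hν, Measure.restrict_apply MeasurableSet.univ, Set.univ_inter]
    exact measure_Ioc_lt_top
  -- integrability of the indicator kernel on the product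
  have hker : Integrable (Function.uncurry fun x t => (Set.Ioi x).indicator w t)
      (ν.prod ν) := by
    have h1 : Integrable (fun p : ℝ × ℝ => (1:ℝ) * w p.2) (ν.prod ν) :=
      (integrable_const (1:ℝ)).mul_prod hw'
    simp only [one_mul] at h1
    have hS : MeasurableSet {p : ℝ × ℝ | p.1 < p.2} :=
      measurableSet_lt measurable_fst measurable_snd
    have heq : Function.uncurry (fun x t => (Set.Ioi x).indicator w t)
        = {p : ℝ × ℝ | p.1 < p.2}.indicator (fun p => w p.2) := by
      funext p
      rcases p with ⟨x, t⟩
      by_cases hxt : x < t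
      · simp [Function.uncurry, Set.indicator_of_mem, hxt, Set.mem_Ioi]
      · simp [Function.uncurry, Set.indicator_of_notMem, hxt, Set.mem_Ioi]
    rw [heq]
    exact h1.indicator hS
  have hswap := MeasureTheory.integral_integral_swap hker
  -- identify LHS
  rw [intervalIntegral.integral_of_le hr.le, intervalIntegral.integral_of_le hr.le]
  have hL : ∫ x in Set.Ioc (0:ℝ) r, (∫ t in x..r, w t)
      = ∫ x, (∫ t, (Set.Ioi x).indicator w t ∂ν) ∂ν := by
    refine setIntegral_congr_fun measurableSet_Ioc (fun x hx => ?_)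
    rw [hν, setIntegral_indicator measurableSet_Ioi]
    have hset : Set.Ioc (0:ℝ) r ∩ Set.Ioi x = Set.Ioc x r := by
      ext t
      simp only [Set.mem_inter_iff, Set.mem_Ioc, Set.mem_Ioi]
      constructor
      · rintro ⟨⟨_, h2⟩, h3⟩; exact ⟨h3, h2⟩
      · rintro ⟨h1, h2⟩; exact ⟨⟨lt_trans hx.1 h1, h2⟩, h1⟩
    rw [hset, intervalIntegral.integral_of_le hx.2]
  have hR : ∫ t, (∫ x, (Set.Ioi x).indicator w t ∂ν) ∂ν
      = ∫ t in Set.Ioc (0:ℝ) r, t * w t := by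
    rw [hν]
    refine setIntegral_congr_fun measurableSet_Ioc (fun t ht => ?_)
    have heq2 : (fun x => (Set.Ioi x).indicator w t)
        = (Set.Iio t).indicator (fun _ => w t) := by
      funext x
      by_cases hxt : x < t
      · simp [Set.indicator_of_mem, hxt, Set.mem_Ioi, Set.mem_Iio]
      · simp [Set.indicator_of_notMem, hxt, Set.mem_Ioi, Set.mem_Iio]
    rw [heq2, setIntegral_indicator measurableSet_Iio]
    have hset : Set.Ioc (0:ℝ) r ∩ Set.Iio t = Set.Ioo 0 t := by
      ext x
      simp only [Set.mem_inter_iff, Set.mem_Ioc, Set.mem_Iio, Set.mem_Ioo]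
      constructor
      · rintro ⟨⟨h1, _⟩, h3⟩; exact ⟨h1, h3⟩
      · rintro ⟨h1, h2⟩; exact ⟨⟨h1, le_trans h2.le ht.2⟩, h2⟩
    rw [hset, setIntegral_const, measureReal_def, Real.volume_Ioo, sub_zero,
      ENNReal.toReal_ofReal ht.1.le, smul_eq_mul]
  rw [hL, hswap, hR]

/-- Key inequality for local optimality of thresholding: if the virtual value
`ψ_F(x) = x − (1−F(x))/f(x)` is nonpositive on `[0,r]`, then for every integrable
`h : [0,r] → [0,∞)`,
`∫₀^r (x·f(x)/(1−F(x)))·(∫ₓ^r h(t)f(t)dt − h(x)(1−F(x))) dx ≤ 0`. -/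
theorem stmt_6 (r : ℝ) (hr : 0 < r) (F f : ℝ → ℝ)
    (hFderiv : ∀ x ∈ Set.Icc 0 r, HasDerivAt F (f x) x)
    (hfcont : ContinuousOn f (Set.Icc 0 r))
    (hfpos : ∀ x ∈ Set.Icc 0 r, 0 < f x)
    (hF1 : ∀ x ∈ Set.Icc 0 r, F x < 1)
    (hψ : ∀ x ∈ Set.Icc 0 r, x - (1 - F x) / f x ≤ 0)
    (h : ℝ → ℝ) (hnn : ∀ x ∈ Set.Icc 0 r, 0 ≤ h x)
    (hint : IntegrableOn h (Set.Icc 0 r)) :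
    ∫ x in (0 : ℝ)..r,
        (x * f x / (1 - F x)) * ((∫ t in x..r, h t * f t) - h x * (1 - F x)) ≤ 0 := by
  set w : ℝ → ℝ := fun t => h t * f t with hwdef
  have hK : IsCompact (Set.Icc (0:ℝ) r) := isCompact_Icc
  have hFcont : ContinuousOn F (Set.Icc 0 r) := fun x hx =>
    (hFderiv x hx).continuousAt.continuousWithinAt
  have hw : IntegrableOn w (Set.Icc 0 r) := hint.mul_continuousOn hfcont hK
  have hwnn : ∀ t ∈ Set.Icc (0:ℝ) r, 0 ≤ w t := fun t ht =>
    mul_nonneg (hnn t ht) (hfpos t ht).le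
  set A : ℝ → ℝ := fun x => ∫ t in x..r, w t with hAdef
  have hAcont : ContinuousOn A (Set.Icc 0 r) := by
    have := intervalIntegral.continuousOn_primitive_interval_left
      (a := (0:ℝ)) (b := r) (f := w) (μ := volume)
      (by rwa [Set.uIcc_of_le hr.le])
    rwa [Set.uIcc_of_le hr.le] at this
  have hAnn : ∀ x ∈ Set.Icc (0:ℝ) r, 0 ≤ A x := by
    intro x hx
    refine intervalIntegral.integral_nonneg hx.2 (fun t ht => hwnn t ⟨le_trans hx.1 ht.1, ht.2⟩)
  -- integrability facts
  have hwInt : IntegrableOn w (Set.Icc 0 r) := hw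
  have hAInt : IntegrableOn A (Set.Icc 0 r) := hAcont.integrableOn_compact hK
  have hg_cont : ContinuousOn (fun x => x * f x / (1 - F x)) (Set.Icc 0 r) := by
    refine ((continuousOn_id.mul hfcont).div (continuousOn_const.sub hFcont)) ?_
    intro x hx
    exact sub_ne_zero.mpr (fun hc => absurd hc.symm (ne_of_lt (hF1 x hx)))
  have hbrInt : IntegrableOn
      (fun x => A x - h x * (1 - F x)) (Set.Icc 0 r) :=
    hAInt.sub (hint.mul_continuousOn (continuousOn_const.sub hFcont) hK)
  have hLHSInt : IntegrableOn
      (fun x => (x * f x / (1 - F x)) * (A x - h x * (1 - F x))) (Set.Icc 0 r) :=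
    hbrInt.continuousOn_mul hg_cont hK
  have hRHSInt : IntegrableOn (fun x => A x - x * w x) (Set.Icc 0 r) := by
    refine hAInt.sub ?_
    exact hwInt.continuousOn_mul continuousOn_id hK
  -- pointwise bound
  have hbound : ∀ x ∈ Set.Icc (0:ℝ) r,
      (x * f x / (1 - F x)) * (A x - h x * (1 - F x)) ≤ A x - x * w x := by
    intro x hx
    have hFx : 0 < 1 - F x := sub_pos.mpr (hF1 x hx)
    have hfx := hfpos x hx
    have hg0 : 0 ≤ x * f x / (1 - F x) :=
      div_nonneg (mul_nonneg hx.1 hfx.le) hFx.le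
    have hg1 : x * f x / (1 - F x) ≤ 1 := by
      rw [div_le_one hFx]
      have := hψ x hx
      have hx' : x ≤ (1 - F x) / f x := by linarith
      calc x * f x ≤ ((1 - F x) / f x) * f x := by
            exact mul_le_mul_of_nonneg_right hx' hfx.le
        _ = 1 - F x := div_mul_cancel₀ _ (ne_of_gt hfx)
    have hexp : (x * f x / (1 - F x)) * (A x - h x * (1 - F x))
        = (x * f x / (1 - F x)) * A x - x * w x := by
      rw [mul_sub]
      congr 1
      field_simp [hwdef]
      ring
    rw [hexp]
    have : (x * f x / (1 - F x)) * A x ≤ A x := by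
      nlinarith [hAnn x hx]
    linarith
  -- compare the two interval integrals
  have hmono : ∫ x in (0:ℝ)..r,
      (x * f x / (1 - F x)) * (A x - h x * (1 - F x))
      ≤ ∫ x in (0:ℝ)..r, (A x - x * w x) := by
    refine intervalIntegral.integral_mono_on hr.le ?_ ?_ hbound
    · exact (hLHSInt.mono_set (by rw [Set.uIcc_of_le hr.le])).intervalIntegrable
    · exact (hRHSInt.mono_set (by rw [Set.uIcc_of_le hr.le])).intervalIntegrable
  have hzero : ∫ x in (0:ℝ)..r, (A x - x * w x) = 0 := by
    have hsplit : ∫ x in (0:ℝ)..r, (A x - x * w x)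
        = (∫ x in (0:ℝ)..r, A x) - ∫ x in (0:ℝ)..r, x * w x := by
      refine intervalIntegral.integral_sub ?_ ?_
      · exact (hAInt.mono_set (by rw [Set.uIcc_of_le hr.le])).intervalIntegrable
      · exact ((hwInt.continuousOn_mul continuousOn_id hK).mono_set
          (by rw [Set.uIcc_of_le hr.le])).intervalIntegrable
    rw [hsplit, fubini_aux r hr w hw, sub_self]
  calc _ ≤ ∫ x in (0:ℝ)..r, (A x - x * w x) := hmono
    _ = 0 := hzero
end

section
/- Let F be a continuously differentiable cdf with density f > 0 and F < 1 on [0, r] with 0 < r < 1, and assume ψ_F(x) = x − (1−F(x))/f(x) ≤ 0 on [0, r]. Let h : [0, r] → [0, ∞) satisfy h(0) = h(r) = 0, and define β(x; h) = ( (1/(1−F(x))²) · [ r²·(1−F(r))² + 2·( ∫ₓ^r h(t)·f(t) dt − h(x)·(1−F(x)) ) ] )^{1/2}, assuming the bracket is nonnegative and β(x; h) ≤ 1 on [0, r]. Then ∫₀^r x·β(x; h)·f(x) dx ≤ ∫₀^r x·β(x; 0)·f(x) dx, where β(x; 0) = r·(1−F(r))/(1−F(x)) is the thresholded strategy. In other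 words, thresholding is globally optimal among such strategies when the competition's cdf is G(x) = min(x, 1). -/
open MeasureTheory intervalIntegral

private lemma sqrt_add_le_aux (b d : ℝ) (hb : 0 < b) (hbd : 0 ≤ b + d) :
    Real.sqrt (b + d) ≤ Real.sqrt b + d / (2 * Real.sqrt b) := by
  have hs : 0 < Real.sqrt b := Real.sqrt_pos.mpr hb
  have hsq : Real.sqrt b ^ 2 = b := Real.sq_sqrt hb.le
  have hrw : Real.sqrt b + d / (2 * Real.sqrt b) = (2 * b + d) / (2 * Real.sqrt b) := by
    field_simp
    nlinarith [hsq]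
  have hrhs : 0 ≤ Real.sqrt b + d / (2 * Real.sqrt b) := by
    rw [hrw]
    apply div_nonneg (by linarith) (by positivity)
  have h2 : 2 * Real.sqrt b * (d / (2 * Real.sqrt b)) = d := by field_simp
  have key : b + d ≤ (Real.sqrt b + d / (2 * Real.sqrt b)) ^ 2 := by
    nlinarith [sq_nonneg (d / (2 * Real.sqrt b)), hsq, h2]
  calc Real.sqrt (b + d) ≤ Real.sqrt ((Real.sqrt b + d / (2 * Real.sqrt b)) ^ 2) :=
        Real.sqrt_le_sqrt key
    _ = Real.sqrt b + d / (2 * Real.sqrt b) := Real.sqrt_sq hrhs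

set_option maxHeartbeats 1000000 in
/-- **Global optimality of thresholding against Uniform[0,1] competition.**
If `ψ_F ≤ 0` on `[0,r]` with `0 < r < 1`, and `β(·;h)` is the strategy with seller
revenue `−h` on `[x,r]` (with `h ≥ 0`, `h(0) = h(r) = 0`), assumed bounded by 1 with a
nonnegative bracket, then the buyer utility `∫₀^r x·β(x;h)·f(x) dx` is at most the one of
the thresholded strategy `β(x;0) = r(1−F(r))/(1−F(x))`. -/
theorem stmt_8 (r : ℝ) (hr0 : 0 < r) (hr1 : r < 1) (F f : ℝ → ℝ)
    (hFderiv : ∀ x ∈ Set.Icc 0 r, HasDerivAt F (f x) x)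
    (hfcont : ContinuousOn f (Set.Icc 0 r))
    (hfpos : ∀ x ∈ Set.Icc 0 r, 0 < f x)
    (hF1 : ∀ x ∈ Set.Icc 0 r, F x < 1)
    (hψ : ∀ x ∈ Set.Icc 0 r, x - (1 - F x) / f x ≤ 0)
    (h : ℝ → ℝ) (hnn : ∀ x ∈ Set.Icc 0 r, 0 ≤ h x)
    (h0 : h 0 = 0) (hhr : h r = 0)
    (hint : IntegrableOn h (Set.Icc 0 r))
    (βh : ℝ → ℝ)
    (hβh : ∀ x ∈ Set.Icc 0 r,
      βh x = Real.sqrt ((1 / (1 - F x) ^ 2) *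
        (r ^ 2 * (1 - F r) ^ 2 + 2 * ((∫ t in x..r, h t * f t) - h x * (1 - F x)))))
    (hbracket : ∀ x ∈ Set.Icc 0 r,
      0 ≤ r ^ 2 * (1 - F r) ^ 2 + 2 * ((∫ t in x..r, h t * f t) - h x * (1 - F x)))
    (hle1 : ∀ x ∈ Set.Icc 0 r, βh x ≤ 1) :
    (∫ x in (0 : ℝ)..r, x * βh x * f x)
      ≤ ∫ x in (0 : ℝ)..r, x * (r * (1 - F r) / (1 - F x)) * f x := by
  have hIcc : MeasurableSet (Set.Icc (0:ℝ) r) := measurableSet_Icc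
  have hrmem : r ∈ Set.Icc (0:ℝ) r := Set.right_mem_Icc.mpr hr0.le
  set c : ℝ := r * (1 - F r) with hcdef
  have hc : 0 < c := mul_pos hr0 (by have := hF1 r hrmem; linarith)
  have hSpos : ∀ x ∈ Set.Icc (0:ℝ) r, 0 < 1 - F x := fun x hx => by
    have := hF1 x hx; linarith
  have hFcont : ContinuousOn F (Set.Icc 0 r) := fun x hx =>
    (hFderiv x hx).continuousAt.continuousWithinAt
  have hScont : ContinuousOn (fun x => 1 - F x) (Set.Icc 0 r) :=
    continuousOn_const.sub hFcont
  -- integrability of h * f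
  have hhf : IntegrableOn (fun t => h t * f t) (Set.Icc 0 r) :=
    hint.mul_continuousOn hfcont isCompact_Icc
  set H : ℝ → ℝ := fun x => ∫ t in x..r, h t * f t with hHdef
  have hHcont : ContinuousOn H (Set.Icc 0 r) := by
    have h1 : IntegrableOn (fun t => h t * f t) (Set.uIcc 0 r) := by
      rwa [Set.uIcc_of_le hr0.le]
    have := continuousOn_primitive_interval_left (f := fun t => h t * f t)
      (μ := volume) (a := 0) (b := r) h1
    rwa [Set.uIcc_of_le hr0.le] at this
  set w : ℝ → ℝ := fun x => x * f x / (1 - F x) with hwdef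
  have hwcont : ContinuousOn w (Set.Icc 0 r) :=
    (continuousOn_id.mul hfcont).div hScont (fun x hx => (hSpos x hx).ne')
  have hw0 : ∀ x ∈ Set.Icc (0:ℝ) r, 0 ≤ w x := fun x hx =>
    div_nonneg (mul_nonneg hx.1 (hfpos x hx).le) (hSpos x hx).le
  have hxfS : ∀ x ∈ Set.Icc (0:ℝ) r, x * f x ≤ 1 - F x := by
    intro x hx
    have h1 := hψ x hx
    have h2 := hfpos x hx
    have h3 : x ≤ (1 - F x) / f x := by linarith
    calc x * f x ≤ ((1 - F x) / f x) * f x := by nlinarith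
      _ = 1 - F x := by field_simp
  have hw1 : ∀ x ∈ Set.Icc (0:ℝ) r, w x ≤ 1 := fun x hx => by
    rw [hwdef]; exact div_le_one_of_le₀ (hxfS x hx) (hSpos x hx).le
  -- pointwise bound
  have hpt : ∀ x ∈ Set.Icc (0:ℝ) r,
      βh x ≤ c / (1 - F x) + (H x - h x * (1 - F x)) / ((1 - F x) * c) := by
    intro x hx
    have hSx := hSpos x hx
    have hb : (0:ℝ) < c ^ 2 / (1 - F x) ^ 2 := by positivity
    have hbd : 0 ≤ c ^ 2 / (1 - F x) ^ 2
        + 2 * (H x - h x * (1 - F x)) / (1 - F x) ^ 2 := by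
      have := hbracket x hx
      have e : c ^ 2 / (1 - F x) ^ 2 + 2 * (H x - h x * (1 - F x)) / (1 - F x) ^ 2
          = (1 / (1 - F x) ^ 2) *
            (r ^ 2 * (1 - F r) ^ 2 + 2 * (H x - h x * (1 - F x))) := by
        rw [hcdef]; field_simp
      rw [e]
      positivity
    have key := sqrt_add_le_aux (c ^ 2 / (1 - F x) ^ 2)
      (2 * (H x - h x * (1 - F x)) / (1 - F x) ^ 2) hb hbd
    have e1 : βh x = Real.sqrt (c ^ 2 / (1 - F x) ^ 2
        + 2 * (H x - h x * (1 - F x)) / (1 - F x) ^ 2) := by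
      rw [hβh x hx]
      congr 1
      rw [hcdef]; field_simp; ring
    have e2 : Real.sqrt (c ^ 2 / (1 - F x) ^ 2) = c / (1 - F x) := by
      rw [← div_pow, Real.sqrt_sq (by positivity)]
    rw [e1]
    refine key.trans (le_of_eq ?_)
    rw [e2]
    field_simp
  have hpt2 : ∀ x ∈ Set.Icc (0:ℝ) r,
      x * βh x * f x ≤ x * (c / (1 - F x)) * f x
        + w x * (H x - h x * (1 - F x)) / c := by
    intro x hx
    have hSx := hSpos x hx
    have hxf : 0 ≤ x * f x := mul_nonneg hx.1 (hfpos x hx).le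
    have h1 : x * f x * βh x ≤ x * f x *
        (c / (1 - F x) + (H x - h x * (1 - F x)) / ((1 - F x) * c)) :=
      mul_le_mul_of_nonneg_left (hpt x hx) hxf
    have heq : x * f x * (c / (1 - F x) + (H x - h x * (1 - F x)) / ((1 - F x) * c))
        = x * (c / (1 - F x)) * f x + w x * (H x - h x * (1 - F x)) / c := by
      rw [hwdef]; field_simp
    calc x * βh x * f x = x * f x * βh x := by ring
      _ ≤ _ := h1
      _ = _ := heq
  -- integrability facts
  have hβnn : ∀ x ∈ Set.Icc (0:ℝ) r, 0 ≤ βh x := fun x hx => by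
    rw [hβh x hx]; exact Real.sqrt_nonneg _
  have hβmeas : AEStronglyMeasurable βh (volume.restrict (Set.Icc 0 r)) := by
    have hSme : AEMeasurable (fun x => 1 - F x) (volume.restrict (Set.Icc (0:ℝ) r)) :=
      (hScont.aestronglyMeasurable hIcc).aemeasurable
    have hHme : AEMeasurable H (volume.restrict (Set.Icc (0:ℝ) r)) :=
      (hHcont.aestronglyMeasurable hIcc).aemeasurable
    have hhme : AEMeasurable h (volume.restrict (Set.Icc (0:ℝ) r)) := hint.1.aemeasurable
    have hexpr : AEStronglyMeasurable (fun x => Real.sqrt ((1 / (1 - F x) ^ 2) *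
        (r ^ 2 * (1 - F r) ^ 2 + 2 * (H x - h x * (1 - F x)))))
        (volume.restrict (Set.Icc 0 r)) := by
      have : AEMeasurable (fun x => (1 / (1 - F x) ^ 2) *
          (r ^ 2 * (1 - F r) ^ 2 + 2 * (H x - h x * (1 - F x))))
          (volume.restrict (Set.Icc (0:ℝ) r)) :=
        ((aemeasurable_const.div (hSme.pow_const 2)).mul
          (aemeasurable_const.add ((hHme.sub (hhme.mul hSme)).const_mul 2)))
      exact (Real.continuous_sqrt.measurable.comp_aemeasurable this).aestronglyMeasurable
    refine hexpr.congr ?_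
    refine (ae_restrict_iff' hIcc).mpr (Filter.Eventually.of_forall fun x hx => ?_)
    exact (hβh x hx).symm
  have hxf_int : IntegrableOn (fun x => x * f x) (Set.Icc 0 r) :=
    (continuousOn_id.mul hfcont).integrableOn_Icc
  have I1 : IntegrableOn (fun x => x * βh x * f x) (Set.Icc 0 r) := by
    have : IntegrableOn (fun x => βh x * (x * f x)) (Set.Icc 0 r) := by
      refine hxf_int.bdd_mul (c := 1) hβmeas ?_
      refine (ae_restrict_iff' hIcc).mpr (Filter.Eventually.of_forall fun x hx => ?_)
      rw [Real.norm_eq_abs, abs_of_nonneg (hβnn x hx)]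
      exact hle1 x hx
    exact this.congr_fun (fun x _ => by ring) hIcc
  have I0 : IntegrableOn (fun x => x * (c / (1 - F x)) * f x) (Set.Icc 0 r) :=
    ((continuousOn_id.mul (continuousOn_const.div hScont
      (fun x hx => (hSpos x hx).ne'))).mul hfcont).integrableOn_Icc
  have IwH : IntegrableOn (fun x => w x * H x) (Set.Icc 0 r) :=
    (hwcont.mul hHcont).integrableOn_Icc
  have Ixhf : IntegrableOn (fun x => x * (h x * f x)) (Set.Icc 0 r) :=
    IntegrableOn.continuousOn_mul continuousOn_id hhf isCompact_Icc
  have IE : IntegrableOn (fun x => w x * (H x - h x * (1 - F x)) / c) (Set.Icc 0 r) := by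
    have base : IntegrableOn (fun x => (w x * H x - x * (h x * f x)) / c)
        (Set.Icc 0 r) := (IwH.sub Ixhf).div_const c
    refine base.congr_fun (fun x hx => ?_) hIcc
    have hSx := (hSpos x hx).ne'
    rw [hwdef]
    field_simp
  -- W(t) := ∫_{[0,t]} w ≤ t
  have hW : ∀ t ∈ Set.Icc (0:ℝ) r, (∫ x in Set.Icc 0 t, w x) ≤ t := by
    intro t ht
    have hsub : Set.Icc (0:ℝ) t ⊆ Set.Icc 0 r := Set.Icc_subset_Icc le_rfl ht.2
    have hwint' : IntegrableOn w (Set.Icc 0 t) := (hwcont.integrableOn_Icc).mono_set hsub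
    have h1 : (∫ x in Set.Icc 0 t, w x) ≤ ∫ x in Set.Icc (0:ℝ) t, (1:ℝ) := by
      refine setIntegral_mono_on hwint' ?_ measurableSet_Icc (fun x hx => hw1 x (hsub hx))
      exact integrableOn_const measure_Icc_lt_top.ne
    have h2 : ∫ x in Set.Icc (0:ℝ) t, (1:ℝ) = t := by
      simp [Real.volume_Icc, ENNReal.toReal_ofReal ht.1, ht.1]
    linarith
  -- Fubini : ∫ w·H ≤ ∫ x·h·f
  have keyneg : (∫ x in Set.Icc 0 r, w x * H x) ≤ ∫ x in Set.Icc 0 r, x * (h x * f x) := by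
    set k : ℝ × ℝ → ℝ :=
      fun p => Set.indicator {q : ℝ × ℝ | q.1 ≤ q.2} (fun q => w q.1 * (h q.2 * f q.2)) p
      with hkdef
    have hker : Integrable k
        ((volume.restrict (Set.Icc 0 r)).prod (volume.restrict (Set.Icc 0 r))) := by
      have hbase : Integrable (fun p : ℝ × ℝ => w p.1 * (h p.2 * f p.2))
          ((volume.restrict (Set.Icc 0 r)).prod (volume.restrict (Set.Icc 0 r))) :=
        (hwcont.integrableOn_Icc).mul_prod hhf
      exact hbase.indicator (measurableSet_le measurable_fst measurable_snd)
    have hswap : (∫ x in Set.Icc 0 r, ∫ t in Set.Icc 0 r, k (x, t))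
        = ∫ t in Set.Icc 0 r, ∫ x in Set.Icc 0 r, k (x, t) :=
      MeasureTheory.integral_integral_swap (f := fun x t => k (x, t)) hker
    have hL : (∫ x in Set.Icc 0 r, ∫ t in Set.Icc 0 r, k (x, t))
        = ∫ x in Set.Icc 0 r, w x * H x := by
      refine setIntegral_congr_fun hIcc (fun x hx => ?_)
      have e1 : (fun t => k (x, t))
          = Set.indicator (Set.Ici x) (fun t => w x * (h t * f t)) := by
        funext t
        simp [hkdef, Set.indicator_apply, Set.mem_Ici, Set.mem_setOf_eq]
      rw [e1, MeasureTheory.integral_indicator measurableSet_Ici,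
        Measure.restrict_restrict measurableSet_Ici]
      have e2 : Set.Ici x ∩ Set.Icc 0 r = Set.Icc x r := by
        ext t
        simp only [Set.mem_inter_iff, Set.mem_Ici, Set.mem_Icc]
        constructor
        · rintro ⟨h1, _, h3⟩; exact ⟨h1, h3⟩
        · rintro ⟨h1, h2⟩; exact ⟨h1, hx.1.trans h1, h2⟩
      rw [e2, MeasureTheory.integral_const_mul]
      congr 1
      rw [integral_Icc_eq_integral_Ioc]
      simp only [hHdef]
      exact (intervalIntegral.integral_of_le hx.2).symm
    have hR : (∫ t in Set.Icc 0 r, ∫ x in Set.Icc 0 r, k (x, t))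
        = ∫ t in Set.Icc 0 r, (∫ x in Set.Icc 0 t, w x) * (h t * f t) := by
      refine setIntegral_congr_fun hIcc (fun t ht => ?_)
      have e1 : (fun x => k (x, t))
          = Set.indicator (Set.Iic t) (fun x => w x * (h t * f t)) := by
        funext x
        simp [hkdef, Set.indicator_apply, Set.mem_Iic, Set.mem_setOf_eq]
      rw [e1, MeasureTheory.integral_indicator measurableSet_Iic,
        Measure.restrict_restrict measurableSet_Iic]
      have e2 : Set.Iic t ∩ Set.Icc 0 r = Set.Icc 0 t := by
        ext x
        simp only [Set.mem_inter_iff, Set.mem_Iic, Set.mem_Icc]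
        constructor
        · rintro ⟨h1, h2, _⟩; exact ⟨h2, h1⟩
        · rintro ⟨h1, h2⟩; exact ⟨h2, h1, h2.trans ht.2⟩
      rw [e2, MeasureTheory.integral_mul_const]
    have mono : (∫ t in Set.Icc 0 r, (∫ x in Set.Icc 0 t, w x) * (h t * f t))
        ≤ ∫ t in Set.Icc 0 r, t * (h t * f t) := by
      have hWcont : ContinuousOn (fun t => ∫ x in Set.Icc 0 t, w x) (Set.Icc 0 r) :=
        continuousOn_primitive_Icc (hwcont.integrableOn_Icc)
      refine setIntegral_mono_on
        (IntegrableOn.continuousOn_mul hWcont hhf isCompact_Icc)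
        Ixhf hIcc (fun t ht => ?_)
      exact mul_le_mul_of_nonneg_right (hW t ht)
        (mul_nonneg (hnn t ht) (hfpos t ht).le)
    calc (∫ x in Set.Icc 0 r, w x * H x) = _ := hL.symm
      _ = _ := hswap
      _ = _ := hR
      _ ≤ _ := mono
  have key : (∫ x in Set.Icc 0 r, w x * (H x - h x * (1 - F x))) ≤ 0 := by
    have split : (∫ x in Set.Icc 0 r, w x * (H x - h x * (1 - F x)))
        = (∫ x in Set.Icc 0 r, w x * H x) - ∫ x in Set.Icc 0 r, x * (h x * f x) := by
      rw [← integral_sub IwH Ixhf]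
      refine setIntegral_congr_fun hIcc (fun x hx => ?_)
      have hSx := (hSpos x hx).ne'
      simp only [hwdef]
      field_simp
    rw [split, sub_nonpos]
    exact keyneg
  have hio : ∀ g : ℝ → ℝ, (∫ x in (0:ℝ)..r, g x) = ∫ x in Set.Icc 0 r, g x := fun g => by
    rw [intervalIntegral.integral_of_le hr0.le, integral_Icc_eq_integral_Ioc]
  rw [hio (fun x => x * βh x * f x), hio (fun x => x * (c / (1 - F x)) * f x)]
  calc (∫ x in Set.Icc 0 r, x * βh x * f x)
      ≤ ∫ x in Set.Icc 0 r, (x * (c / (1 - F x)) * f x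
          + w x * (H x - h x * (1 - F x)) / c) :=
        setIntegral_mono_on I1 (I0.add IE) hIcc hpt2
    _ = (∫ x in Set.Icc 0 r, x * (c / (1 - F x)) * f x)
          + (∫ x in Set.Icc 0 r, w x * (H x - h x * (1 - F x))) / c := by
        rw [integral_add I0 IE, MeasureTheory.integral_div]
    _ ≤ ∫ x in Set.Icc 0 r, x * (c / (1 - F x)) * f x := by
        have hd : (∫ x in Set.Icc 0 r, w x * (H x - h x * (1 - F x))) / c ≤ 0 :=
          div_nonpos_iff.mpr (Or.inr ⟨key, hc.le⟩)
        linarith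
end

section
/- Let F be a continuously differentiable cdf with density f > 0 on [0, r], let C > 0 and β*(x) = C/(1−F(x)), and let G be a continuously differentiable cdf with density g such that G(β*(x)) > 0 on [0, r]. Assume the virtual value ψ_F(x) = x − (1−F(x))/f(x) satisfies ψ_F(x) ≤ 0 on [0, r). Let h : [0, r] → [0, ∞) with h(r) = 0 and let ρ be defined by β*(x)·ρ(x)·(1−F(x)) = ∫ₓ^r h(t)·β*'(t)·g(β*(t)) / G(β*(t))² dt − h(x)/G(β*(x)). Then I = ∫₀^r x·f(x)·g(β*(x))·ρ(x)·β*(x) dx ≤ 0. -/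
open MeasureTheory intervalIntegral

/-- **Local optimality of thresholding, general competition cdf `G`.** Let
`β*(x) = C/(1−F(x))` be the thresholding strategy with `G(β*(x)) > 0` on `[0,r]` and
`ψ_F ≤ 0` on `[0,r)`. If `h ≥ 0` with `h(r) = 0` and the perturbation direction `ρ`
satisfies `β*(x)ρ(x)(1−F(x)) = ∫ₓ^r h(t)β*'(t)g(β*(t))/G(β*(t))² dt − h(x)/G(β*(x))`,
then the first-order term `I = ∫₀^r x·f(x)·g(β*(x))·ρ(x)·β*(x) dx` is nonpositive. -/
theorem stmt_9 (r : ℝ) (hr : 0 < r) (F f : ℝ → ℝ)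
    (hFderiv : ∀ x ∈ Set.Icc 0 r, HasDerivAt F (f x) x)
    (hfcont : ContinuousOn f (Set.Icc 0 r))
    (hfpos : ∀ x ∈ Set.Icc 0 r, 0 < f x)
    (hF1 : ∀ x ∈ Set.Icc 0 r, F x < 1)
    (C : ℝ) (hC : 0 < C)
    (βstar : ℝ → ℝ) (hβ : ∀ x, βstar x = C / (1 - F x))
    (G g : ℝ → ℝ) (hGderiv : ∀ y, HasDerivAt G (g y) y) (hgcont : Continuous g)
    (hGmono : Monotone G) (hGnn : ∀ y, 0 ≤ G y) (hGle : ∀ y, G y ≤ 1)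
    (hGpos : ∀ x ∈ Set.Icc 0 r, 0 < G (βstar x))
    (hψ : ∀ x ∈ Set.Ico 0 r, x - (1 - F x) / f x ≤ 0)
    (h : ℝ → ℝ) (hnn : ∀ x ∈ Set.Icc 0 r, 0 ≤ h x) (hhr : h r = 0)
    (hint : IntegrableOn h (Set.Icc 0 r))
    (ρ : ℝ → ℝ)
    (hρ : ∀ x ∈ Set.Icc 0 r,
      βstar x * ρ x * (1 - F x) =
        (∫ t in x..r, h t * deriv βstar t * g (βstar t) / (G (βstar t)) ^ 2)
          - h x / G (βstar x)) :
    (∫ x in (0 : ℝ)..r, x * f x * g (βstar x) * ρ x * βstar x) ≤ 0 := by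
  have hIcc : Set.uIcc (0 : ℝ) r = Set.Icc 0 r := Set.uIcc_of_le hr.le
  -- basic positivity facts
  have hF1pos : ∀ x ∈ Set.Icc 0 r, (0 : ℝ) < 1 - F x := fun x hx => sub_pos.2 (hF1 x hx)
  have hgnn : ∀ y, 0 ≤ g y := by
    intro y
    have h1 : Filter.Tendsto (slope G y) (nhdsWithin y (Set.Ioi y)) (nhds (g y)) :=
      (hasDerivAt_iff_tendsto_slope.mp (hGderiv y)).mono_left
        (nhdsWithin_mono y fun z hz => ne_of_gt hz)
    refine ge_of_tendsto h1 ?_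
    filter_upwards [self_mem_nhdsWithin] with z hz
    have : y ≤ z := le_of_lt hz
    simp only [slope_def_field, div_eq_mul_inv]
    exact mul_nonneg (sub_nonneg.2 (hGmono this)) (inv_nonneg.2 (sub_nonneg.2 this))
  -- abbreviations
  set u : ℝ → ℝ := fun x => G (βstar x) with hu
  set w : ℝ → ℝ := fun x => f x * g (βstar x) / (1 - F x) with hw
  set k : ℝ → ℝ := fun t => C * f t / (1 - F t) ^ 2 * (g (βstar t) / (u t) ^ 2) with hk
  set A : ℝ → ℝ := fun x => ∫ t in x..r, h t * k t with hA
  set Φ : ℝ → ℝ := fun t => ∫ x in (0 : ℝ)..t, x * w x with hΦ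
  have hune : ∀ x ∈ Set.Icc 0 r, u x ≠ 0 := fun x hx => ne_of_gt (hGpos x hx)
  have hF1ne : ∀ x ∈ Set.Icc 0 r, (1 - F x) ≠ 0 := fun x hx => ne_of_gt (hF1pos x hx)
  -- continuity facts
  have hGcont : Continuous G := by
    rw [continuous_iff_continuousAt]; exact fun y => (hGderiv y).continuousAt
  have hFcont : ContinuousOn F (Set.Icc 0 r) := fun x hx =>
    (hFderiv x hx).continuousAt.continuousWithinAt
  have hβcont : ContinuousOn βstar (Set.Icc 0 r) := by
    have : βstar = fun x => C / (1 - F x) := funext hβ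
    rw [this]
    exact continuousOn_const.div (continuousOn_const.sub hFcont) hF1ne
  have hucont : ContinuousOn u (Set.Icc 0 r) := hGcont.comp_continuousOn hβcont
  have hwcont : ContinuousOn w (Set.Icc 0 r) :=
    (hfcont.mul (hgcont.comp_continuousOn hβcont)).div (continuousOn_const.sub hFcont) hF1ne
  have hkcont : ContinuousOn k (Set.Icc 0 r) := by
    refine ((continuousOn_const.mul hfcont).div
      ((continuousOn_const.sub hFcont).pow 2) ?_).mul
      ((hgcont.comp_continuousOn hβcont).div (hucont.pow 2) ?_)
    · exact fun x hx => pow_ne_zero 2 (hF1ne x hx)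
    · exact fun x hx => pow_ne_zero 2 (hune x hx)
  have hxwcont : ContinuousOn (fun x => x * w x) (Set.Icc 0 r) :=
    continuousOn_id.mul hwcont
  -- integrability
  have ihk : IntegrableOn (fun t => h t * k t) (Set.Icc 0 r) :=
    hint.mul_continuousOn hkcont isCompact_Icc
  have ixw : IntegrableOn (fun x => x * w x) (Set.uIcc 0 r) := by
    rw [hIcc]; exact hxwcont.integrableOn_Icc
  have ihk' : IntegrableOn (fun t => h t * k t) (Set.uIcc 0 r) := by
    rw [hIcc]; exact ihk
  have iΦcont : ContinuousOn Φ (Set.Icc 0 r) := by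
    rw [← hIcc]
    exact intervalIntegral.continuousOn_primitive_interval ixw
  have iAcont : ContinuousOn A (Set.Icc 0 r) := by
    rw [← hIcc]
    exact intervalIntegral.continuousOn_primitive_interval_left ihk'
  -- derivatives of βstar, u, q
  have hβd : ∀ x ∈ Set.Icc 0 r, HasDerivAt βstar (C * f x / (1 - F x) ^ 2) x := by
    intro x hx
    have h1 : HasDerivAt (fun y => 1 - F y) (0 - f x) x :=
      (hasDerivAt_const x (1 : ℝ)).sub (hFderiv x hx)
    have h2 := (hasDerivAt_const x C).div h1 (hF1ne x hx)
    have h3 : HasDerivAt (fun y => C / (1 - F y)) (C * f x / (1 - F x) ^ 2) x := by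
      exact h2.congr_deriv (by ring)
    exact h3.congr_of_eventuallyEq (Filter.Eventually.of_forall fun y => hβ y)
  have hderiv_eq : ∀ t ∈ Set.Icc 0 r, deriv βstar t = C * f t / (1 - F t) ^ 2 :=
    fun t ht => (hβd t ht).deriv
  have hud : ∀ x ∈ Set.Icc 0 r,
      HasDerivAt u (g (βstar x) * (C * f x / (1 - F x) ^ 2)) x := fun x hx =>
    (hGderiv (βstar x)).comp x (hβd x hx)
  have hu'nn : ∀ x ∈ Set.Icc 0 r, 0 ≤ g (βstar x) * (C * f x / (1 - F x) ^ 2) := by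
    intro x hx
    exact mul_nonneg (hgnn _) (div_nonneg (mul_nonneg hC.le (hfpos x hx).le)
      (pow_nonneg (hF1pos x hx).le 2))
  -- monotonicity of q x = x * (1 - F x)
  set q : ℝ → ℝ := fun x => x * (1 - F x) with hq
  have hqd : ∀ x ∈ Set.Icc 0 r, HasDerivAt q ((1 - F x) - x * f x) x := by
    intro x hx
    have h1 : HasDerivAt (fun y => 1 - F y) (0 - f x) x :=
      (hasDerivAt_const x (1 : ℝ)).sub (hFderiv x hx)
    have := (hasDerivAt_id x).mul h1
    refine this.congr_deriv ?_
    simp only [id_eq]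
    ring
  have hqmono : MonotoneOn q (Set.Icc 0 r) := by
    apply monotoneOn_of_deriv_nonneg (convex_Icc 0 r)
    · exact fun x hx => (hqd x hx).continuousAt.continuousWithinAt
    · intro x hx
      rw [interior_Icc] at hx
      exact ((hqd x (Set.Ioo_subset_Icc_self hx)).differentiableAt).differentiableWithinAt
    · intro x hx
      rw [interior_Icc] at hx
      have hxI : x ∈ Set.Icc 0 r := Set.Ioo_subset_Icc_self hx
      rw [(hqd x hxI).deriv]
      have hψx := hψ x ⟨hx.1.le, hx.2⟩
      have hfx := hfpos x hxI
      have : x * f x ≤ 1 - F x := by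
        have : x ≤ (1 - F x) / f x := by linarith
        calc x * f x ≤ (1 - F x) / f x * f x := by
              exact mul_le_mul_of_nonneg_right this hfx.le
          _ = 1 - F x := by field_simp
      linarith
  have hqnn : ∀ x ∈ Set.Icc 0 r, 0 ≤ q x := fun x hx =>
    mul_nonneg hx.1 (hF1pos x hx).le
  -- the key bound on Φ
  have hΦle : ∀ t ∈ Set.Icc 0 r, Φ t ≤ q t / C * u t := by
    intro t ht
    have h0t : Set.Icc 0 t ⊆ Set.Icc 0 r := Set.Icc_subset_Icc le_rfl ht.2
    have huIcc : Set.uIcc (0 : ℝ) t = Set.Icc 0 t := Set.uIcc_of_le ht.1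
    have hint1 : IntervalIntegrable (fun x => x * w x) volume 0 t := by
      apply ContinuousOn.intervalIntegrable; rw [huIcc]; exact hxwcont.mono h0t
    have hcu' : ContinuousOn (fun x => g (βstar x) * (C * f x / (1 - F x) ^ 2))
        (Set.Icc 0 r) := by
      refine (hgcont.comp_continuousOn hβcont).mul
        ((continuousOn_const.mul hfcont).div ((continuousOn_const.sub hFcont).pow 2)
          (fun x hx => pow_ne_zero 2 (hF1ne x hx)))
    have hint2 : IntervalIntegrable
        (fun x => q t / C * (g (βstar x) * (C * f x / (1 - F x) ^ 2))) volume 0 t := by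
      apply ContinuousOn.intervalIntegrable; rw [huIcc]
      exact (continuousOn_const.mul hcu').mono h0t
    have step1 : Φ t ≤ ∫ x in (0 : ℝ)..t,
        q t / C * (g (βstar x) * (C * f x / (1 - F x) ^ 2)) := by
      apply intervalIntegral.integral_mono_on ht.1 hint1 hint2
      intro x hx
      have hxI : x ∈ Set.Icc 0 r := h0t hx
      have e1 : x * w x = q x / C * (g (βstar x) * (C * f x / (1 - F x) ^ 2)) := by
        rw [hw, hq]
        field_simp [hF1ne x hxI, hC.ne']
      rw [e1]
      apply mul_le_mul_of_nonneg_right _ (hu'nn x hxI)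
      have hqle : q x ≤ q t := hqmono hxI ht hx.2
      gcongr
    have step2 : (∫ x in (0 : ℝ)..t,
        q t / C * (g (βstar x) * (C * f x / (1 - F x) ^ 2)))
        = q t / C * (u t - u 0) := by
      rw [intervalIntegral.integral_const_mul]
      congr 1
      apply intervalIntegral.integral_eq_sub_of_hasDerivAt
      · intro x hx
        rw [huIcc] at hx
        exact hud x (h0t hx)
      · apply ContinuousOn.intervalIntegrable; rw [huIcc]; exact hcu'.mono h0t
    have step3 : q t / C * (u t - u 0) ≤ q t / C * u t := by
      apply mul_le_mul_of_nonneg_left _ (div_nonneg (hqnn t ht) hC.le)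
      have := hGnn (βstar 0)
      simp only [hu]
      linarith
    linarith [step1, step2 ▸ step1]
  -- key pointwise inequality
  have hknn : ∀ t ∈ Set.Icc 0 r, 0 ≤ k t := by
    intro t ht
    exact mul_nonneg (div_nonneg (mul_nonneg hC.le (hfpos t ht).le)
      (pow_nonneg (hF1pos t ht).le 2))
      (div_nonneg (hgnn _) (pow_nonneg (hGnn _) 2))
  have hkey : ∀ t ∈ Set.Icc 0 r, k t * Φ t ≤ t * w t / u t := by
    intro t ht
    have h1 : k t * Φ t ≤ k t * (q t / C * u t) :=
      mul_le_mul_of_nonneg_left (hΦle t ht) (hknn t ht)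
    have h2 : k t * (q t / C * u t) = t * w t / u t := by
      rw [hk, hq, hw]
      field_simp [hF1ne t ht, hune t ht, hC.ne']
    linarith [h2 ▸ h1]
  -- rewrite the main integral
  have hA0 : ∀ x ∈ Set.Icc 0 r,
      (∫ t in x..r, h t * deriv βstar t * g (βstar t) / (G (βstar t)) ^ 2) = A x := by
    intro x hx
    apply intervalIntegral.integral_congr
    intro t ht
    rw [Set.uIcc_of_le hx.2] at ht
    have htI : t ∈ Set.Icc 0 r := ⟨le_trans hx.1 ht.1, ht.2⟩
    show h t * deriv βstar t * g (βstar t) / (G (βstar t)) ^ 2 = h t * k t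
    have hGu : G (βstar t) = u t := rfl
    rw [hderiv_eq t htI, hk, hGu]
    ring
  have ixwA : IntervalIntegrable (fun x => x * w x * A x) volume 0 r := by
    apply ContinuousOn.intervalIntegrable; rw [hIcc]; exact hxwcont.mul iAcont
  have hxwu_cont : ContinuousOn (fun x => x * w x / u x) (Set.Icc 0 r) :=
    hxwcont.div hucont hune
  have ihxwu : IntervalIntegrable (fun x => h x * (x * w x / u x)) volume 0 r := by
    apply IntegrableOn.intervalIntegrable; rw [hIcc]
    exact hint.mul_continuousOn hxwu_cont isCompact_Icc
  have hmain : (∫ x in (0 : ℝ)..r, x * f x * g (βstar x) * ρ x * βstar x)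
      = (∫ x in (0 : ℝ)..r, x * w x * A x)
        - ∫ x in (0 : ℝ)..r, h x * (x * w x / u x) := by
    rw [← intervalIntegral.integral_sub ixwA ihxwu]
    apply intervalIntegral.integral_congr
    intro x hx
    rw [hIcc] at hx
    show x * f x * g (βstar x) * ρ x * βstar x
      = x * w x * A x - h x * (x * w x / u x)
    have e1 : x * f x * g (βstar x) * ρ x * βstar x
        = x * w x * (βstar x * ρ x * (1 - F x)) := by
      rw [hw]; field_simp [hF1ne x hx]
    rw [e1, hρ x hx, hA0 x hx]
    have : G (βstar x) = u x := rfl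
    rw [this]
    ring
  -- Fubini
  set ν : Measure ℝ := volume.restrict (Set.Ioc 0 r) with hν
  set φ : ℝ × ℝ → ℝ := fun p => p.1 * w p.1 * (h p.2 * k p.2) with hφ
  set S : Set (ℝ × ℝ) := {p : ℝ × ℝ | p.1 < p.2} with hS
  have hSmeas : MeasurableSet S := measurableSet_lt measurable_fst measurable_snd
  have hφint : Integrable φ (ν.prod ν) := by
    have h1 : Integrable (fun x => x * w x) ν :=
      (hxwcont.integrableOn_Icc).mono_set Set.Ioc_subset_Icc_self
    have h2 : Integrable (fun t => h t * k t) ν := ihk.mono_set Set.Ioc_subset_Icc_self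
    exact h1.mul_prod h2
  have hψint : Integrable (S.indicator φ) (ν.prod ν) := hφint.indicator hSmeas
  have hswap0 : (∫ x, ∫ t, S.indicator φ (x, t) ∂ν ∂ν)
      = ∫ t, ∫ x, S.indicator φ (x, t) ∂ν ∂ν :=
    integral_integral_swap (by exact hψint)
  have hL : ∀ x ∈ Set.Ioc (0 : ℝ) r, (∫ t, S.indicator φ (x, t) ∂ν) = x * w x * A x := by
    intro x hx
    have hxI : x ∈ Set.Icc 0 r := Set.Ioc_subset_Icc_self hx
    have e1 : (fun t => S.indicator φ (x, t))
        = fun t => x * w x * (Set.Ioi x).indicator (fun t => h t * k t) t := by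
      funext t
      by_cases hlt : x < t
      · rw [Set.indicator_of_mem (by exact hlt : (x, t) ∈ S),
          Set.indicator_of_mem (Set.mem_Ioi.2 hlt)]
      · rw [Set.indicator_of_notMem (by exact hlt : (x, t) ∉ S),
          Set.indicator_of_notMem (by simpa using hlt), mul_zero]
    rw [e1]
    rw [MeasureTheory.integral_const_mul]
    congr 1
    rw [MeasureTheory.integral_indicator measurableSet_Ioi, hν,
      Measure.restrict_restrict measurableSet_Ioi]
    have : Set.Ioi x ∩ Set.Ioc 0 r = Set.Ioc x r := by
      ext t
      simp only [Set.mem_inter_iff, Set.mem_Ioi, Set.mem_Ioc]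
      constructor
      · rintro ⟨h1, _, h3⟩; exact ⟨h1, h3⟩
      · rintro ⟨h1, h2⟩; exact ⟨h1, lt_trans hx.1 h1, h2⟩
    rw [this]
    exact (intervalIntegral.integral_of_le hxI.2).symm
  have hR : ∀ t ∈ Set.Ioc (0 : ℝ) r, (∫ x, S.indicator φ (x, t) ∂ν) = h t * k t * Φ t := by
    intro t ht
    have e1 : (fun x => S.indicator φ (x, t))
        = fun x => (Set.Iio t).indicator (fun x => x * w x) x * (h t * k t) := by
      funext x
      by_cases hlt : x < t
      · rw [Set.indicator_of_mem (by exact hlt : (x, t) ∈ S),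
          Set.indicator_of_mem (Set.mem_Iio.2 hlt)]
      · rw [Set.indicator_of_notMem (by exact hlt : (x, t) ∉ S),
          Set.indicator_of_notMem (by simpa using hlt), zero_mul]
    rw [e1]
    rw [MeasureTheory.integral_mul_const]
    rw [mul_comm]
    congr 1
    rw [MeasureTheory.integral_indicator measurableSet_Iio, hν,
      Measure.restrict_restrict measurableSet_Iio]
    have : Set.Iio t ∩ Set.Ioc 0 r = Set.Ioo 0 t := by
      ext x
      simp only [Set.mem_inter_iff, Set.mem_Iio, Set.mem_Ioc, Set.mem_Ioo]
      constructor
      · rintro ⟨h1, h2, _⟩; exact ⟨h2, h1⟩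
      · rintro ⟨h1, h2⟩; exact ⟨h2, h1, le_trans (le_of_lt h2) ht.2⟩
    rw [this, ← MeasureTheory.integral_Ioc_eq_integral_Ioo]
    exact (intervalIntegral.integral_of_le ht.1.le).symm
  have hswap : (∫ x in (0 : ℝ)..r, x * w x * A x)
      = ∫ t in (0 : ℝ)..r, h t * k t * Φ t := by
    rw [intervalIntegral.integral_of_le hr.le, intervalIntegral.integral_of_le hr.le]
    calc (∫ x in Set.Ioc (0:ℝ) r, x * w x * A x)
        = ∫ x, ∫ t, S.indicator φ (x, t) ∂ν ∂ν := by
          rw [hν]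
          apply setIntegral_congr_fun measurableSet_Ioc
          intro x hx
          exact (hL x hx).symm
      _ = ∫ t, ∫ x, S.indicator φ (x, t) ∂ν ∂ν := hswap0
      _ = ∫ t in Set.Ioc (0:ℝ) r, h t * k t * Φ t := by
          rw [hν]
          apply setIntegral_congr_fun measurableSet_Ioc
          intro t ht
          exact hR t ht
  -- final comparison
  have ihkΦ : IntervalIntegrable (fun t => h t * k t * Φ t) volume 0 r := by
    apply IntegrableOn.intervalIntegrable; rw [hIcc]
    exact ihk.mul_continuousOn iΦcont isCompact_Icc
  have hmono : (∫ t in (0 : ℝ)..r, h t * k t * Φ t)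
      ≤ ∫ x in (0 : ℝ)..r, h x * (x * w x / u x) := by
    apply intervalIntegral.integral_mono_on hr.le ihkΦ ihxwu
    intro t ht
    have : h t * k t * Φ t = h t * (k t * Φ t) := by ring
    rw [this]
    exact mul_le_mul_of_nonneg_left (hkey t ht) (hnn t ht)
  rw [hmain, hswap]
  linarith [hmono]
end

section
/- Let F be a continuously differentiable cdf with density f > 0 on [0, x₀], let C > 0 and β(y) = C/(1−F(y)), and let G be a continuously differentiable cdf with density g. If the virtual value ψ_F(y) = y − (1−F(y))/f(y) satisfies ψ_F(y) ≤ 0 on [0, x₀], then for every x ∈ [0, x₀], ∫₀^x ( y·f(y)/(1−F(y)) ) · g(β(y)) dy ≤ (1/C) · x · (1−F(x)) · G(β(x)). -/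
open MeasureTheory intervalIntegral

/-- Integration-by-parts bound for the thresholding strategy `β(y) = C/(1−F(y))`:
if `ψ_F ≤ 0` on `[0,x₀]` then for every `x ∈ [0,x₀]`,
`∫₀^x (y·f(y)/(1−F(y)))·g(β(y)) dy ≤ (1/C)·x·(1−F(x))·G(β(x))`. -/
theorem stmt_10 (x₀ : ℝ) (hx₀ : 0 ≤ x₀) (F f : ℝ → ℝ)
    (hFderiv : ∀ y ∈ Set.Icc 0 x₀, HasDerivAt F (f y) y)
    (hfcont : ContinuousOn f (Set.Icc 0 x₀))
    (hfpos : ∀ y ∈ Set.Icc 0 x₀, 0 < f y)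
    (hF1 : ∀ y ∈ Set.Icc 0 x₀, F y < 1)
    (C : ℝ) (hC : 0 < C)
    (β : ℝ → ℝ) (hβ : ∀ y, β y = C / (1 - F y))
    (G g : ℝ → ℝ) (hGderiv : ∀ u, HasDerivAt G (g u) u) (hgcont : Continuous g)
    (hGmono : Monotone G) (hGnn : ∀ u, 0 ≤ G u) (hGle : ∀ u, G u ≤ 1)
    (hψ : ∀ y ∈ Set.Icc 0 x₀, y - (1 - F y) / f y ≤ 0) :
    ∀ x ∈ Set.Icc 0 x₀,
      (∫ y in (0 : ℝ)..x, (y * f y / (1 - F y)) * g (β y))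
        ≤ (1 / C) * x * (1 - F x) * G (β x) := by
  have hβfun : β = fun y => C / (1 - F y) := funext hβ
  subst hβfun
  intro x hx
  obtain ⟨hx0, hxx₀⟩ := hx
  have hsub : Set.Icc (0:ℝ) x ⊆ Set.Icc 0 x₀ := Set.Icc_subset_Icc le_rfl hxx₀
  have hFne : ∀ y ∈ Set.Icc (0:ℝ) x₀, 1 - F y ≠ 0 := fun y hy => sub_ne_zero.2 (hF1 y hy).ne'
  have hFcont : ContinuousOn F (Set.Icc 0 x₀) :=
    fun y hy => (hFderiv y hy).continuousAt.continuousWithinAt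
  set β : ℝ → ℝ := fun y => C / (1 - F y) with hβdef
  set D : ℝ → ℝ := fun y => (1/C) * (((1 - F y) - y * f y) * G (β y)) +
      (y * f y / (1 - F y)) * g (β y) with hDdef
  set φ : ℝ → ℝ := fun y => (1/C) * (y * (1 - F y) * G (β y)) with hφdef
  -- derivative of φ
  have hφderiv : ∀ y ∈ Set.Icc (0:ℝ) x₀, HasDerivAt φ (D y) y := by
    intro y hy
    have hne := hFne y hy
    have hu : HasDerivAt (fun y => 1 - F y) (-(f y)) y := by
      simpa using (hFderiv y hy).const_sub 1
    have hβd : HasDerivAt β (C * f y / (1 - F y)^2) y := by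
      have := (hasDerivAt_const y C).div hu hne
      refine this.congr_deriv ?_
      ring
    have hGβ : HasDerivAt (fun y => G (β y)) (g (β y) * (C * f y / (1 - F y)^2)) y :=
      (hGderiv (β y)).comp y hβd
    have h1 : HasDerivAt (fun y => y * (1 - F y)) (1 * (1 - F y) + y * (-(f y))) y :=
      (hasDerivAt_id y).mul hu
    have h2 := (h1.mul hGβ).const_mul (1/C)
    refine h2.congr_deriv ?_
    simp only [hDdef]
    field_simp
    ring
  -- continuity pieces
  have huoc : Set.uIcc (0:ℝ) x = Set.Icc 0 x := Set.uIcc_of_le hx0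
  have hβcont : ContinuousOn β (Set.Icc 0 x₀) :=
    continuousOn_const.div (continuousOn_const.sub hFcont) hFne
  have hIcont : ContinuousOn (fun y => (y * f y / (1 - F y)) * g (β y)) (Set.Icc 0 x₀) :=
    (((continuousOn_id.mul hfcont).div (continuousOn_const.sub hFcont) hFne)).mul
      (hgcont.comp_continuousOn hβcont)
  have hGcont : Continuous G := continuous_iff_continuousAt.2 fun u => (hGderiv u).continuousAt
  have hGβcont : ContinuousOn (fun y => G (β y)) (Set.Icc 0 x₀) :=
    hGcont.comp_continuousOn hβcont
  have hDcont : ContinuousOn D (Set.Icc 0 x₀) := by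
    apply ContinuousOn.add
    · exact continuousOn_const.mul
        (((continuousOn_const.sub hFcont).sub (continuousOn_id.mul hfcont)).mul hGβcont)
    · exact hIcont
  have hIint : IntervalIntegrable (fun y => (y * f y / (1 - F y)) * g (β y)) volume 0 x :=
    ContinuousOn.intervalIntegrable (by rw [huoc]; exact hIcont.mono hsub)
  have hDint : IntervalIntegrable D volume 0 x :=
    ContinuousOn.intervalIntegrable (by rw [huoc]; exact hDcont.mono hsub)
  -- FTC
  have hFTC : (∫ y in (0:ℝ)..x, D y) = φ x - φ 0 :=
    intervalIntegral.integral_eq_sub_of_hasDerivAt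
      (fun t ht => hφderiv t (hsub (huoc ▸ ht))) hDint
  -- pointwise bound
  have hle : ∀ y ∈ Set.Icc (0:ℝ) x, (y * f y / (1 - F y)) * g (β y) ≤ D y := by
    intro y hy
    have hy₀ := hsub hy
    have hf := hfpos y hy₀
    have hψy := hψ y hy₀
    have hF : F y < 1 := hF1 y hy₀
    have h1 : y * f y ≤ 1 - F y := by
      have := mul_le_mul_of_nonneg_right (sub_nonpos.1 hψy) hf.le
      calc y * f y ≤ ((1 - F y) / f y) * f y := by
            exact mul_le_mul_of_nonneg_right (sub_nonpos.1 hψy) hf.le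
        _ = 1 - F y := by field_simp
    have h2 : 0 ≤ (1/C) * (((1 - F y) - y * f y) * G (β y)) := by
      apply mul_nonneg (by positivity)
      exact mul_nonneg (by linarith) (hGnn _)
    simp only [hDdef]
    linarith
  have hmono := intervalIntegral.integral_mono_on hx0 hIint hDint hle
  calc (∫ y in (0:ℝ)..x, (y * f y / (1 - F y)) * g (β y)) ≤ ∫ y in (0:ℝ)..x, D y := hmono
    _ = φ x - φ 0 := hFTC
    _ = (1 / C) * x * (1 - F x) * G (β x) := by simp only [hφdef]; ring
end
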